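/- For all positive integers r and n with r even, F_r * (∑_{k=1}^n L_{2rk}) = F_{rn} * L_{rn+r}. -/

import Mathlib

open Finset

def L : ℕ → ℤ
  | 0 => 2
  | 1 => 1
  | n + 2 => L (n + 1) + L n

def F (n : ℕ) : ℤ := Nat.fib n

lemma Frec (n : ℕ) : F (n + 2) = F n + F (n + 1) := by
  unfold F; push_cast [Nat.fib_add_two]; ring

lemma Fadd (m n : ℕ) : F (m + n + 1) = F m * F n + F (m + 1) * F (n + 1) := by
  unfold F; push_cast [Nat.fib_add]; ring

lemma LF : ∀ n, L (n + 1) = F n + F (n + 2)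
  | 0 => by norm_num [L, F]
  | 1 => by norm_num [L, F]
  | n + 2 => by
    have h1 := LF n
    have h2 := LF (n + 1)
    show L (n + 2) + L (n + 1) = _
    rw [h1, h2, Frec (n + 2), Frec n]
    ring

lemma cat (n k : ℕ) : F (n + k) * F (n + 1) - F n * F (n + k + 1) = (-1) ^ n * F k := by
  induction n with
  | zero => simp [F]
  | succ n ih =>
    rw [show n + 1 + k = n + k + 1 from by ring, show n + k + 1 + 1 = n + k + 2 from rfl,
      show n + 1 + 1 = n + 2 from rfl, Frec n, Frec (n + k), pow_succ]
    nlinarith [ih]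

lemma key2 (a b : ℕ) (ha : Even a) : F a * L (a + b) = F (2 * a + b) - F b := by
  rcases a with _ | c
  · simp [F]
  · have hL : L (c + 1 + b) = F (c + b) + F (c + b + 2) := by
      rw [show c + 1 + b = (c + b) + 1 from by ring, LF]
    have hA : F (2 * (c + 1) + b) = F (c+1) * F (c+b) + F (c+2) * F (c+b+1) := by
      rw [show 2 * (c + 1) + b = (c + 1) + (c + b) + 1 from by ring, Fadd]
    have hc := cat (c + 1) b
    have hsgn : ((-1 : ℤ)) ^ (c + 1) = 1 := (Even.neg_one_pow ha)
    rw [hsgn, one_mul] at hc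
    rw [hL, hA]
    have e : c + 1 + b = c + b + 1 := by ring
    rw [e] at hc
    rw [show c + 1 + 1 = c + 2 from rfl, show c + b + 1 + 1 = c + b + 2 from rfl] at hc
    linarith [hc]

lemma key (a b : ℕ) (hb : Even b) : F b * L (a + b) = F (a + 2 * b) - F a := by
  rcases b with _ | c
  · simp [F, L]
  · have hL : L (a + (c + 1)) = F (a + c) + F (a + c + 2) := by
      rw [show a + (c + 1) = (a + c) + 1 from by ring, LF]
    have hA : F (a + 2 * (c + 1)) = F (c+1) * F (a+c) + F (c+2) * F (a+c+1) := by
      rw [show a + 2 * (c + 1) = (c + 1) + (a + c) + 1 from by ring, Fadd]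
    have hc := cat (c + 1) a
    have hsgn : ((-1 : ℤ)) ^ (c + 1) = 1 := (Even.neg_one_pow hb)
    rw [hsgn, one_mul] at hc
    rw [hL, hA]
    rw [show c + 1 + a = a + c + 1 from by ring, show c + 1 + 1 = c + 2 from rfl,
      show a + c + 1 + 1 = a + c + 2 from by ring] at hc
    linarith [hc]

theorem stmt2 (r n : ℕ) (hr : 0 < r) (hn : 0 < n) (hre : Even r) :
    F r * ∑ k ∈ Finset.Icc 1 n, L (2 * r * k) = F (r * n) * L (r * n + r) := by
  induction n with
  | zero => omega
  | succ n ih =>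
    rcases Nat.eq_zero_or_pos n with h0 | hpos
    · subst h0
      simp only [Finset.Icc_self, Finset.sum_singleton]
      rw [show 2 * r * 1 = r + r from by ring, show r * 1 = r from by ring]
    · have ih' := ih hpos
      rw [Finset.sum_Icc_succ_top (by omega : 1 ≤ n + 1), mul_add, ih']
      have hrn : Even (r * n) := hre.mul_right n
      have hrn1 : Even (r * (n + 1)) := hre.mul_right (n + 1)
      have h1 : F (r * n) * L (r * n + r) = F (2 * (r * n) + r) - F r := key2 (r * n) r hrn
      have h2 : F (r * (n + 1)) * L (r * (n + 1) + r) = F (2 * (r * (n + 1)) + r) - F r :=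
        key2 (r * (n + 1)) r hrn1
      have h3 : F r * L (2 * r * (n + 1)) =
          F ((2 * (r * n) + r) + 2 * r) - F (2 * (r * n) + r) := by
        have := key (2 * (r * n) + r) r hre
        rw [show 2 * (r * n) + r + r = 2 * r * (n + 1) from by ring] at this
        exact this
      rw [h1, h2, h3, show 2 * (r * n) + r + 2 * r = 2 * (r * (n + 1)) + r from by ring]
      ring
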